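/- With N the number of visits to y before first return to x by a simple random walk on a tree, where d(x,y)=L, deg(x)=D₁, deg(y)=D₂, the random variable η := N/D₂ - 1/D₁ satisfies E[η] = 0, and for every k ≥ 1 there exists a constant c = c(k), independent of D₁, D₂ and L, such that E|η|^k ≤ c·L^{k-1}. -/

import Mathlib

open MeasureTheory Set
open scoped ENNReal

lemma aux_pow_diff (k : ℕ) (x : ℝ) (hx : 0 ≤ x) :
    (x+1)^(k+1) - x^(k+1) ≤ ((k:ℝ)+1) * (x+1)^k := by
  induction k with
  | zero => simp
  | succ k ih =>
    have h2 : x^(k+1) ≤ (x+1)^(k+1) := pow_le_pow_left₀ hx (by linarith) _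
    have key : (x+1)^(k+2) - x^(k+2) = (x+1)*((x+1)^(k+1) - x^(k+1)) + x^(k+1) := by ring
    have h3 : (x+1)*((x+1)^(k+1) - x^(k+1)) ≤ (x+1)*(((k:ℝ)+1) * (x+1)^k) :=
      mul_le_mul_of_nonneg_left ih (by linarith)
    have h4 : (x+1)*(((k:ℝ)+1) * (x+1)^k) = ((k:ℝ)+1) * (x+1)^(k+1) := by ring
    push_cast
    nlinarith [h3, h4, h2]

lemma aux_summable (k : ℕ) {q : ℝ} (h0 : 0 ≤ q) (h1 : q < 1) :
    Summable (fun n : ℕ => ((n:ℝ)+1)^k * q^n) := by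
  have hq : ‖q‖ < 1 := by rwa [Real.norm_of_nonneg h0]
  have hs : Summable (fun n : ℕ => (2:ℝ)^k * ((n:ℝ)^k * q^n) + (2:ℝ)^k * q^n) :=
    ((summable_pow_mul_geometric_of_norm_lt_one k hq).mul_left _).add
      ((summable_geometric_of_lt_one h0 h1).mul_left _)
  refine Summable.of_nonneg_of_le (fun n => by positivity) (fun n => ?_) hs
  have hb : ((n:ℝ)+1)^k ≤ (2:ℝ)^k * ((n:ℝ)^k + 1) := by
    rcases Nat.eq_zero_or_pos n with h|h
    · subst h
      simp only [Nat.cast_zero, zero_add, one_pow]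
      nlinarith [one_le_pow₀ (by norm_num : (1:ℝ) ≤ 2) (n := k), pow_nonneg (le_refl (0:ℝ)) k]
    · have hn1 : (1:ℝ) ≤ n := by exact_mod_cast h
      calc ((n:ℝ)+1)^k ≤ (2*n)^k := pow_le_pow_left₀ (by positivity) (by linarith) k
        _ = 2^k * (n:ℝ)^k := by rw [mul_pow]
        _ ≤ 2^k*((n:ℝ)^k+1) := by nlinarith [pow_nonneg (le_trans zero_le_one hn1) k, pow_pos (by norm_num : (0:ℝ)<2) k]
  calc ((n:ℝ)+1)^k * q^n ≤ ((2:ℝ)^k*((n:ℝ)^k+1)) * q^n :=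
        mul_le_mul_of_nonneg_right hb (pow_nonneg h0 n)
    _ = (2:ℝ)^k * ((n:ℝ)^k * q^n) + (2:ℝ)^k * q^n := by ring

lemma aux_moment (k : ℕ) {q : ℝ} (h0 : 0 ≤ q) (h1 : q < 1) :
    ∑' n : ℕ, ((n:ℝ)+1)^k * q^n ≤ (k.factorial : ℝ) / (1-q)^(k+1) := by
  induction k with
  | zero =>
    simp only [pow_zero, one_mul, Nat.factorial_zero, Nat.cast_one, pow_one]
    rw [tsum_geometric_of_lt_one h0 h1, inv_eq_one_div, pow_one]
  | succ k ih =>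
    have hq : 0 < 1 - q := by linarith
    have hsum : Summable (fun n : ℕ => ((n:ℝ)+1)^(k+1) * q^n) := aux_summable _ h0 h1
    have hsum' : Summable (fun n : ℕ => ((n:ℝ))^(k+1) * q^n) := by
      have hqn : ‖q‖ < 1 := by rwa [Real.norm_of_nonneg h0]
      exact summable_pow_mul_geometric_of_norm_lt_one (k+1) hqn
    set S := ∑' n : ℕ, ((n:ℝ)+1)^(k+1) * q^n with hS
    have hshift : ∑' n : ℕ, ((n:ℝ)+1)^(k+1) * q^(n+1) = ∑' n : ℕ, ((n:ℝ))^(k+1) * q^n := by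
      rw [Summable.tsum_eq_zero_add hsum']
      have hz : ((0:ℕ):ℝ)^(k+1) * q^0 = 0 := by simp
      rw [hz, zero_add]
      refine tsum_congr fun n => ?_
      push_cast
      ring
    have hqS : Summable (fun n : ℕ => ((n:ℝ)+1)^(k+1) * q^(n+1)) := by
      have := hsum.mul_right q
      refine this.congr fun n => ?_
      rw [pow_succ]; ring
    have key : (1-q) * S = ∑' n : ℕ, (((n:ℝ)+1)^(k+1) - (n:ℝ)^(k+1)) * q^n := by
      have h2 : q * S = ∑' n : ℕ, ((n:ℝ)+1)^(k+1) * q^(n+1) := by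
        rw [hS, ← tsum_mul_left]
        refine tsum_congr fun n => ?_
        rw [pow_succ]; ring
      have h3 : (1-q) * S = S - q * S := by ring
      rw [h3, h2, hshift, ← Summable.tsum_sub hsum hsum']
      refine tsum_congr fun n => ?_
      ring
    have bound : ∑' n : ℕ, (((n:ℝ)+1)^(k+1) - (n:ℝ)^(k+1)) * q^n
        ≤ ((k:ℝ)+1) * ∑' n : ℕ, ((n:ℝ)+1)^k * q^n := by
      rw [← tsum_mul_left]
      refine Summable.tsum_le_tsum (fun n => ?_) ?_ ((aux_summable k h0 h1).mul_left _)
      · have := mul_le_mul_of_nonneg_right (aux_pow_diff k n (Nat.cast_nonneg n)) (pow_nonneg h0 n)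
        calc (((n:ℝ)+1)^(k+1) - (n:ℝ)^(k+1)) * q^n ≤ (((k:ℝ)+1) * ((n:ℝ)+1)^k) * q^n := this
          _ = ((k:ℝ)+1) * (((n:ℝ)+1)^k * q^n) := by ring
      · refine (hsum.sub hsum').congr fun n => ?_
        ring
    have hfin : (1-q) * S ≤ ((k:ℝ)+1) * ((k.factorial : ℝ) / (1-q)^(k+1)) :=
      key ▸ (bound.trans (mul_le_mul_of_nonneg_left ih (by positivity)))
    have : S ≤ (((k:ℝ)+1) * ((k.factorial : ℝ) / (1-q)^(k+1))) / (1-q) := by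
      rw [le_div_iff₀ hq]
      linarith [hfin]
    refine this.trans (le_of_eq ?_)
    rw [Nat.factorial_succ]
    push_cast
    field_simp
    ring

lemma aux_add_pow (k : ℕ) {a b : ℝ} (ha : 0 ≤ a) (hb : 0 ≤ b) :
    (a+b)^k ≤ 2^k * (a^k + b^k) := by
  rcases le_total a b with h|h
  · calc (a+b)^k ≤ (2*b)^k := pow_le_pow_left₀ (by linarith) (by linarith) k
      _ = 2^k * b^k := by rw [mul_pow]
      _ ≤ 2^k * (a^k + b^k) := by nlinarith [pow_nonneg ha k, pow_pos (by norm_num : (0:ℝ)<2) k]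
  · calc (a+b)^k ≤ (2*a)^k := pow_le_pow_left₀ (by linarith) (by linarith) k
      _ = 2^k * a^k := by rw [mul_pow]
      _ ≤ 2^k * (a^k + b^k) := by nlinarith [pow_nonneg hb k, pow_pos (by norm_num : (0:ℝ)<2) k]

lemma aux_integrable (μ : Measure ℕ) [IsProbabilityMeasure μ] {q : ℝ} (h0 : 0 ≤ q) (h1 : q < 1)
    (hμ : ∀ n : ℕ, μ {n+1} ≤ ENNReal.ofReal (q^n)) (f : ℕ → ℝ) (m : ℕ)
    (hf : ∀ j, |f j| ≤ ((j:ℝ)+1)^m) : Integrable f μ := by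
  refine ⟨measurable_from_nat.aestronglyMeasurable, ?_⟩
  have hlint : ∫⁻ a, (‖f a‖₊ : ℝ≥0∞) ∂μ = ∑' j : ℕ, (‖f j‖₊ : ℝ≥0∞) * μ {j} :=
    lintegral_countable' _
  rw [HasFiniteIntegral]; simp only [enorm_eq_nnnorm]; rw [hlint, tsum_eq_zero_add' ENNReal.summable]
  have hb : Summable (fun n : ℕ => ((n:ℝ)+2)^m * q^n) := by
    refine Summable.of_nonneg_of_le (fun n => by positivity) (fun n => ?_)
      ((aux_summable m h0 h1).mul_left ((2:ℝ)^m))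
    have h2 : ((n:ℝ)+2)^m ≤ 2^m * ((n:ℝ)+1)^m := by
      calc ((n:ℝ)+2)^m ≤ (2*((n:ℝ)+1))^m := pow_le_pow_left₀ (by positivity) (by linarith) m
        _ = 2^m * ((n:ℝ)+1)^m := by rw [mul_pow]
    calc ((n:ℝ)+2)^m * q^n ≤ (2^m * ((n:ℝ)+1)^m) * q^n :=
          mul_le_mul_of_nonneg_right h2 (pow_nonneg h0 n)
      _ = 2^m * (((n:ℝ)+1)^m * q^n) := by ring
  have htail : ∑' n : ℕ, (‖f (n+1)‖₊ : ℝ≥0∞) * μ {n+1}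
      ≤ ENNReal.ofReal (∑' n : ℕ, ((n:ℝ)+2)^m * q^n) := by
    rw [ENNReal.ofReal_tsum_of_nonneg (fun n => by positivity) hb]
    refine ENNReal.tsum_le_tsum fun n => ?_
    have h1' : (‖f (n+1)‖₊ : ℝ≥0∞) ≤ ENNReal.ofReal (((n:ℝ)+2)^m) := by
      rw [← enorm_eq_nnnorm, ← ofReal_norm]
      refine ENNReal.ofReal_le_ofReal ?_
      calc ‖f (n+1)‖ = |f (n+1)| := rfl
        _ ≤ (((n+1:ℕ):ℝ)+1)^m := hf (n+1)
        _ = ((n:ℝ)+2)^m := by push_cast; ring_nf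
    calc (‖f (n+1)‖₊ : ℝ≥0∞) * μ {n+1} ≤ ENNReal.ofReal (((n:ℝ)+2)^m) * ENNReal.ofReal (q^n) :=
          mul_le_mul' h1' (hμ n)
      _ = ENNReal.ofReal (((n:ℝ)+2)^m * q^n) := (ENNReal.ofReal_mul (by positivity)).symm
  have h00 : (‖f 0‖₊ : ℝ≥0∞) * μ {0} < ⊤ :=
    lt_of_le_of_lt (mul_le_mul' le_rfl (prob_le_one)) (by simpa using ENNReal.coe_lt_top)
  exact lt_of_le_of_lt (add_le_add le_rfl htail)
    (ENNReal.add_lt_top.mpr ⟨h00, lt_of_le_of_lt le_rfl ENNReal.ofReal_lt_top⟩)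

lemma aux_integral_eq {Ω : Type} [MeasurableSpace Ω] (P : Measure Ω)
    (N : Ω → ℕ) (hN : Measurable N) (f : ℕ → ℝ) (hf : Integrable f (P.map N)) :
    ∫ ω, f (N ω) ∂P = ∑' j, ((P.map N) {j}).toReal * f j := by
  rw [← integral_map hN.aemeasurable measurable_from_nat.aestronglyMeasurable,
    integral_countable' hf]
  simp [smul_eq_mul, Measure.real]

set_option maxHeartbeats 2000000 in
theorem stmt9 :
    ∀ k : ℕ, 1 ≤ k → ∃ c : ℝ,
      ∀ (L D₁ D₂ : ℕ), 1 ≤ L → 1 ≤ D₁ → 1 ≤ D₂ →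
      ∀ (Ω : Type) [inst : MeasurableSpace Ω] (P : Measure Ω),
        IsProbabilityMeasure P →
      ∀ (N : Ω → ℕ), Measurable N →
      (P {ω | N ω = 0} = 1 - ((L * D₁ : ℕ) : ℝ≥0∞)⁻¹) →
      (∀ j : ℕ, 1 ≤ j → P {ω | N ω = j} =
        ((L ^ 2 * D₁ * D₂ : ℕ) : ℝ≥0∞)⁻¹ * (1 - ((L * D₂ : ℕ) : ℝ≥0∞)⁻¹) ^ (j - 1)) →
      (∫ ω, ((N ω : ℝ) / D₂ - 1 / D₁) ∂P = 0) ∧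
      ∫ ω, |(N ω : ℝ) / D₂ - 1 / D₁| ^ k ∂P ≤ c * (L : ℝ) ^ (k - 1) := by
  intro k hk
  obtain ⟨m, rfl⟩ : ∃ m, k = m + 1 := ⟨k - 1, (Nat.succ_pred_eq_of_pos hk).symm⟩
  refine ⟨1 + 2^(m+1) * (((m+1).factorial : ℝ) + 1), ?_⟩
  intro L D₁ D₂ hL hD₁ hD₂ Ω inst P hP N hN h0 hj
  -- basic real facts
  have hl : (1:ℝ) ≤ (L:ℝ) := by exact_mod_cast hL
  have hd1 : (1:ℝ) ≤ (D₁:ℝ) := by exact_mod_cast hD₁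
  have hd2 : (1:ℝ) ≤ (D₂:ℝ) := by exact_mod_cast hD₂
  have hl0 : (0:ℝ) < (L:ℝ) := by linarith
  have hd10 : (0:ℝ) < (D₁:ℝ) := by linarith
  have hd20 : (0:ℝ) < (D₂:ℝ) := by linarith
  have hlne : (L:ℝ) ≠ 0 := ne_of_gt hl0
  have hd1ne : (D₁:ℝ) ≠ 0 := ne_of_gt hd10
  have hd2ne : (D₂:ℝ) ≠ 0 := ne_of_gt hd20
  set q : ℝ := 1 - 1/((L:ℝ)*(D₂:ℝ)) with hqdef
  set r : ℝ := 1/((L:ℝ)^2*(D₁:ℝ)*(D₂:ℝ)) with hrdef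
  have hu1 : 1/((L:ℝ)*(D₂:ℝ)) ≤ 1 := by
    rw [div_le_one (by positivity)]; nlinarith
  have hu0 : 0 < 1/((L:ℝ)*(D₂:ℝ)) := by positivity
  have hq0 : 0 ≤ q := by rw [hqdef]; linarith
  have hq1 : q < 1 := by rw [hqdef]; linarith
  have h1q : 1 - q = 1/((L:ℝ)*(D₂:ℝ)) := by rw [hqdef]; ring
  have hr0 : 0 ≤ r := by positivity
  -- ENNReal conversions
  have hconv : ∀ n : ℕ, 1 ≤ n → ((n:ℕ) : ℝ≥0∞)⁻¹ = ENNReal.ofReal (1/(n:ℝ)) := by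
    intro n hn
    have hn0 : (0:ℝ) < (n:ℝ) := by exact_mod_cast hn
    rw [one_div, ENNReal.ofReal_inv_of_pos hn0, ENNReal.ofReal_natCast]
  have hQ : (1 : ℝ≥0∞) - ((L * D₂ : ℕ) : ℝ≥0∞)⁻¹ = ENNReal.ofReal q := by
    rw [hconv (L*D₂) (Nat.one_le_iff_ne_zero.mpr (by positivity)), hqdef,
      ENNReal.ofReal_sub 1 (by positivity), ENNReal.ofReal_one]
    congr 2
    push_cast
    ring
  -- the pushforward measure
  set μ : Measure ℕ := P.map N with hμdef
  have : IsProbabilityMeasure μ := Measure.isProbabilityMeasure_map hN.aemeasurable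
  have hmap : ∀ j : ℕ, μ {j} = P {ω | N ω = j} := by
    intro j
    rw [hμdef, Measure.map_apply hN (measurableSet_singleton j)]
    rfl
  -- real values of the weights
  set W : ℕ → ℝ := fun j => (P {ω | N ω = j}).toReal with hWdef
  have hW0 : W 0 = 1 - 1/((L:ℝ)*(D₁:ℝ)) := by
    rw [hWdef]
    simp only
    rw [h0, hconv (L*D₁) (Nat.one_le_iff_ne_zero.mpr (by positivity))]
    rw [show ((1:ℝ≥0∞) - ENNReal.ofReal (1/((L*D₁ : ℕ):ℝ))) =
        ENNReal.ofReal (1 - 1/((L*D₁:ℕ):ℝ)) by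
      rw [ENNReal.ofReal_sub 1 (by positivity), ENNReal.ofReal_one]]
    rw [ENNReal.toReal_ofReal (by
      have : 1/((L*D₁:ℕ):ℝ) ≤ 1 := by
        rw [div_le_one (by push_cast; positivity)]
        push_cast; nlinarith
      linarith)]
    congr 1
    push_cast
    ring
  have hWs : ∀ n : ℕ, W (n+1) = r * q^n := by
    intro n
    rw [hWdef]
    simp only
    rw [hj (n+1) (Nat.le_add_left 1 n), hQ]
    rw [Nat.add_sub_cancel, ENNReal.toReal_mul, ENNReal.toReal_pow,
      ENNReal.toReal_ofReal hq0, ENNReal.toReal_inv, hrdef]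
    congr 2
    push_cast
    simp [ENNReal.toReal_natCast]
  -- ENNReal bound for integrability
  have hμbound : ∀ n : ℕ, μ {n+1} ≤ ENNReal.ofReal (q^n) := by
    intro n
    rw [hmap, hj (n+1) (Nat.le_add_left 1 n), hQ, Nat.add_sub_cancel,
      ← ENNReal.ofReal_pow hq0]
    have : ((L^2*D₁*D₂ : ℕ) : ℝ≥0∞)⁻¹ ≤ 1 := by
      rw [ENNReal.inv_le_one]
      exact_mod_cast Nat.one_le_iff_ne_zero.mpr (by positivity)
    calc ((L^2*D₁*D₂ : ℕ) : ℝ≥0∞)⁻¹ * ENNReal.ofReal (q^n)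
        ≤ 1 * ENNReal.ofReal (q^n) := mul_le_mul' this le_rfl
      _ = ENNReal.ofReal (q^n) := one_mul _
  -- the two integrands
  set f₁ : ℕ → ℝ := fun j => (j:ℝ)/(D₂:ℝ) - 1/(D₁:ℝ) with hf₁def
  set f₂ : ℕ → ℝ := fun j => |(j:ℝ)/(D₂:ℝ) - 1/(D₁:ℝ)|^(m+1) with hf₂def
  have hf₁bd : ∀ j : ℕ, |f₁ j| ≤ ((j:ℝ)+1)^1 := by
    intro j
    rw [hf₁def, pow_one]
    refine (abs_sub _ _).trans ?_
    have h1 : |(j:ℝ)/(D₂:ℝ)| ≤ (j:ℝ) := by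
      rw [abs_of_nonneg (by positivity), div_le_iff₀ hd20]; nlinarith [Nat.cast_nonneg (α := ℝ) j]
    have h2 : |1/(D₁:ℝ)| ≤ 1 := by
      rw [abs_of_nonneg (by positivity), div_le_one hd10]; linarith
    linarith
  have hf₂bd : ∀ j : ℕ, |f₂ j| ≤ ((j:ℝ)+1)^(m+1) := by
    intro j
    rw [hf₂def]
    simp only [abs_pow, abs_abs]
    refine pow_le_pow_left₀ (abs_nonneg _) ?_ (m+1)
    simpa [hf₁def, pow_one] using hf₁bd j
  -- integrability
  have hint₁ : Integrable f₁ μ := aux_integrable μ hq0 hq1 hμbound f₁ 1 hf₁bd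
  have hint₂ : Integrable f₂ μ := aux_integrable μ hq0 hq1 hμbound f₂ (m+1) hf₂bd
  have hieq₁ : ∫ ω, f₁ (N ω) ∂P = ∑' j, W j * f₁ j := by
    rw [aux_integral_eq P N hN f₁ hint₁]
    exact tsum_congr fun j => by rw [hmap]
  have hieq₂ : ∫ ω, f₂ (N ω) ∂P = ∑' j, W j * f₂ j := by
    rw [aux_integral_eq P N hN f₂ hint₂]
    exact tsum_congr fun j => by rw [hmap]
  -- geometric series facts
  have hqnorm : ‖q‖ < 1 := by rwa [Real.norm_of_nonneg hq0]
  have hBsum : Summable (fun n : ℕ => q^n) := summable_geometric_of_lt_one hq0 hq1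
  have hB : ∑' n : ℕ, q^n = (1-q)⁻¹ := tsum_geometric_of_lt_one hq0 hq1
  have hnsum : Summable (fun n : ℕ => (n:ℝ) * q^n) := by
    simpa using summable_pow_mul_geometric_of_norm_lt_one 1 hqnorm
  have hAsum : Summable (fun n : ℕ => ((n:ℝ)+1) * q^n) :=
    (aux_summable 1 hq0 hq1).congr (fun n => by rw [pow_one])
  have hA : ∑' n : ℕ, ((n:ℝ)+1) * q^n = q/(1-q)^2 + (1-q)⁻¹ := by
    rw [← tsum_coe_mul_geometric_of_norm_lt_one hqnorm, ← hB, ← Summable.tsum_add hnsum hBsum]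
    exact tsum_congr fun n => by ring
  constructor
  · -- the mean is zero
    have goal_eq : ∫ ω, ((N ω : ℝ) / D₂ - 1 / D₁) ∂P = ∫ ω, f₁ (N ω) ∂P := by
      refine integral_congr_ae (Filter.Eventually.of_forall fun ω => ?_)
      rw [hf₁def]
    rw [goal_eq, hieq₁]
    have hterm : ∀ n : ℕ, W (n+1) * f₁ (n+1) =
        (r/(D₂:ℝ)) * (((n:ℝ)+1) * q^n) - (r/(D₁:ℝ)) * q^n := by
      intro n
      rw [hWs, hf₁def]
      simp only
      push_cast
      ring
    have hssum : Summable (fun n : ℕ => W (n+1) * f₁ (n+1)) :=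
      ((hAsum.mul_left (r/(D₂:ℝ))).sub (hBsum.mul_left (r/(D₁:ℝ)))).congr
        (fun n => (hterm n).symm)
    have hfull : Summable (fun j : ℕ => W j * f₁ j) := (summable_nat_add_iff 1).1 hssum
    rw [Summable.tsum_eq_zero_add hfull]
    have htail : ∑' n : ℕ, W (n+1) * f₁ (n+1)
        = (r/(D₂:ℝ)) * (q/(1-q)^2 + (1-q)⁻¹) - (r/(D₁:ℝ)) * (1-q)⁻¹ := by
      rw [tsum_congr hterm, Summable.tsum_sub (hAsum.mul_left _) (hBsum.mul_left _),
        tsum_mul_left, tsum_mul_left, hA, hB]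
    rw [htail, hW0, hf₁def]
    simp only [Nat.cast_zero, zero_div]
    rw [h1q, hqdef, hrdef]
    have hLD2 : (L:ℝ)*(D₂:ℝ) ≠ 0 := by positivity
    field_simp
    ring
  · -- the moment bound
    have goal_eq : ∫ ω, |(N ω : ℝ) / D₂ - 1 / D₁|^(m+1) ∂P = ∫ ω, f₂ (N ω) ∂P := by
      refine integral_congr_ae (Filter.Eventually.of_forall fun ω => ?_)
      rw [hf₂def]
    have hk1 : m + 1 - 1 = m := by omega
    rw [goal_eq, hieq₂, hk1]
    -- pointwise bound on the tail terms
    set C1 : ℝ := r * 2^(m+1) / (D₂:ℝ)^(m+1) with hC1def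
    set C2 : ℝ := r * 2^(m+1) with hC2def
    have hg : ∀ n : ℕ, W (n+1) * f₂ (n+1)
        ≤ C1 * (((n:ℝ)+1)^(m+1) * q^n) + C2 * q^n := by
      intro n
      have hW : W (n+1) = r * q^n := hWs n
      have hf2v : f₂ (n+1) ≤ 2^(m+1) * ((((n:ℝ)+1)/(D₂:ℝ))^(m+1) + 1) := by
        rw [hf₂def]
        simp only
        have habs : |((n+1:ℕ):ℝ)/(D₂:ℝ) - 1/(D₁:ℝ)| ≤ ((n:ℝ)+1)/(D₂:ℝ) + 1 := by
          refine (abs_sub _ _).trans ?_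
          have h1 : |((n+1:ℕ):ℝ)/(D₂:ℝ)| = ((n:ℝ)+1)/(D₂:ℝ) := by
            rw [abs_of_nonneg (by positivity)]; push_cast; ring
          have h2 : |1/(D₁:ℝ)| ≤ 1 := by
            rw [abs_of_nonneg (by positivity), div_le_one hd10]; linarith
          rw [h1]; linarith
        calc |((n+1:ℕ):ℝ)/(D₂:ℝ) - 1/(D₁:ℝ)|^(m+1)
            ≤ (((n:ℝ)+1)/(D₂:ℝ) + 1)^(m+1) :=
              pow_le_pow_left₀ (abs_nonneg _) habs (m+1)
          _ ≤ 2^(m+1) * ((((n:ℝ)+1)/(D₂:ℝ))^(m+1) + 1^(m+1)) :=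
              aux_add_pow (m+1) (by positivity) (by norm_num)
          _ = 2^(m+1) * ((((n:ℝ)+1)/(D₂:ℝ))^(m+1) + 1) := by norm_num
      have hWnn : 0 ≤ r * q^n := by positivity
      calc W (n+1) * f₂ (n+1) ≤ (r * q^n) * (2^(m+1) * ((((n:ℝ)+1)/(D₂:ℝ))^(m+1) + 1)) := by
            rw [hW]; exact mul_le_mul_of_nonneg_left hf2v hWnn
        _ = C1 * (((n:ℝ)+1)^(m+1) * q^n) + C2 * q^n := by
            rw [hC1def, hC2def, div_pow]; field_simp
    have hgsum : Summable (fun n : ℕ => C1 * (((n:ℝ)+1)^(m+1) * q^n) + C2 * q^n) :=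
      ((aux_summable (m+1) hq0 hq1).mul_left C1).add (hBsum.mul_left C2)
    have hW2nn : ∀ j, 0 ≤ W j * f₂ j := by
      intro j
      refine mul_nonneg ENNReal.toReal_nonneg ?_
      rw [hf₂def]; positivity
    have hssum : Summable (fun n : ℕ => W (n+1) * f₂ (n+1)) :=
      Summable.of_nonneg_of_le (fun n => hW2nn (n+1)) hg hgsum
    have hfull : Summable (fun j : ℕ => W j * f₂ j) := (summable_nat_add_iff 1).1 hssum
    rw [Summable.tsum_eq_zero_add hfull]
    -- head term bound
    have hhead : W 0 * f₂ 0 ≤ 1 := by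
      have h1 : W 0 ≤ 1 := by
        rw [hW0]
        have h0' : (0:ℝ) < 1/((L:ℝ)*(D₁:ℝ)) := by positivity
        linarith
      have h2 : f₂ 0 ≤ 1 := by
        rw [hf₂def]
        simp only [Nat.cast_zero, zero_div, zero_sub, abs_neg]
        refine pow_le_one₀ (abs_nonneg _) ?_
        rw [abs_of_nonneg (by positivity), div_le_one hd10]; linarith
      have h3 : 0 ≤ f₂ 0 := by rw [hf₂def]; positivity
      calc W 0 * f₂ 0 ≤ 1 * 1 := mul_le_mul h1 h2 h3 zero_le_one
        _ = 1 := one_mul 1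
    -- tail bound
    have htail : ∑' n : ℕ, W (n+1) * f₂ (n+1)
        ≤ C1 * (((m+1).factorial : ℝ) / (1-q)^(m+2)) + C2 * (1-q)⁻¹ := by
      calc ∑' n : ℕ, W (n+1) * f₂ (n+1)
          ≤ ∑' n : ℕ, (C1 * (((n:ℝ)+1)^(m+1) * q^n) + C2 * q^n) :=
            Summable.tsum_le_tsum hg hssum hgsum
        _ = C1 * ∑' n : ℕ, ((n:ℝ)+1)^(m+1) * q^n + C2 * ∑' n : ℕ, q^n := by
            rw [Summable.tsum_add ((aux_summable (m+1) hq0 hq1).mul_left C1) (hBsum.mul_left C2),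
              tsum_mul_left, tsum_mul_left]
        _ ≤ C1 * (((m+1).factorial : ℝ) / (1-q)^(m+2)) + C2 * (1-q)⁻¹ := by
            have hC1nn : 0 ≤ C1 := by rw [hC1def]; positivity
            have := aux_moment (m+1) hq0 hq1
            have hBe : ∑' n : ℕ, q^n = (1-q)⁻¹ := hB
            rw [hBe]
            exact add_le_add (mul_le_mul_of_nonneg_left this hC1nn) le_rfl
    -- arithmetic simplification of the bound
    have e1 : C1 * (((m+1).factorial : ℝ) / (1-q)^(m+2))
        = 2^(m+1) * ((m+1).factorial : ℝ) * (L:ℝ)^m / (D₁:ℝ) := by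
      have hxpow : ((1:ℝ)/((L:ℝ)*(D₂:ℝ)))^(m+2) = 1/(((L:ℝ)*(D₂:ℝ))^(m+2)) := by
        rw [div_pow, one_pow]
      simp only [hC1def, hC2def, hrdef, h1q, hxpow]
      rw [div_div_eq_mul_div, div_one, mul_pow, pow_add, pow_add]
      field_simp [hlne, hd1ne, hd2ne]
      ring
    have e2 : C2 * (1-q)⁻¹ = 2^(m+1) / ((L:ℝ)*(D₁:ℝ)) := by
      simp only [hC2def, hrdef, h1q]
      rw [one_div ((L:ℝ)*(D₂:ℝ))]
      field_simp [hlne, hd1ne, hd2ne]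
    have hlm : (1:ℝ) ≤ (L:ℝ)^m := one_le_pow₀ hl
    have b1 : 2^(m+1) * ((m+1).factorial : ℝ) * (L:ℝ)^m / (D₁:ℝ)
        ≤ 2^(m+1) * ((m+1).factorial : ℝ) * (L:ℝ)^m := by
      refine div_le_self (by positivity) hd1
    have b2 : 2^(m+1) / ((L:ℝ)*(D₁:ℝ)) ≤ 2^(m+1) * (L:ℝ)^m := by
      have h1 : (2:ℝ)^(m+1) / ((L:ℝ)*(D₁:ℝ)) ≤ 2^(m+1) := by
        refine div_le_self (by positivity) (by nlinarith)
      nlinarith [pow_pos (by norm_num : (0:ℝ) < 2) (m+1)]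
    have htail' : ∑' n : ℕ, W (n+1) * f₂ (n+1)
        ≤ 2^(m+1) * ((m+1).factorial : ℝ) * (L:ℝ)^m + 2^(m+1) * (L:ℝ)^m := by
      rw [e1, e2] at htail
      linarith
    calc W 0 * f₂ 0 + ∑' n : ℕ, W (n+1) * f₂ (n+1)
        ≤ 1 + (2^(m+1) * ((m+1).factorial : ℝ) * (L:ℝ)^m + 2^(m+1) * (L:ℝ)^m) := by
          linarith
      _ ≤ (1 + 2^(m+1) * (((m+1).factorial : ℝ) + 1)) * (L:ℝ)^m := by
          nlinarith [hlm, pow_pos (by norm_num : (0:ℝ) < 2) (m+1),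
            (by positivity : (0:ℝ) ≤ ((m+1).factorial : ℝ))]
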